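/- arXiv:2504.03644 — 2 statements merged into one kernel-verified Lean document; each statement's English description precedes it below -/
import Mathlib

section
/- Let G be a finite simple graph with adjacency matrix A over ℂ, and let (θ_1, …, θ_K; E_1, …, E_K) be a spectral decomposition of A. If G admits quantum fractional revival from a vertex u to a vertex v at some time t, then there exist complex numbers α and β with β ≠ 0 and |α|² + |β|² = 1 such that for each r ∈ {1, …, K} there is a sign ε_r ∈ {1, −1} with E_r e_v = ( −Re(α/β) + ε_r·√( (Re(α/β))² + 1 ) )·(E_r e_u). -/
open Matrix

/-- The standard basis vector `e_u` in `ℂ^V`. -/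
noncomputable def stdVec {V : Type*} (u : V) : V → ℂ :=
  letI := Classical.decEq V
  Pi.single u 1

/-- The transition matrix `H(t) = exp(i t A)` of a graph with adjacency matrix `A`. -/
noncomputable def transMatrix {V : Type*} [Fintype V] (A : Matrix V V ℂ) (t : ℝ) :
    Matrix V V ℂ :=
  letI := Classical.decEq V
  NormedSpace.exp ((Complex.I * (t : ℂ)) • A)

/-- Quantum fractional revival from `u` to `v` at time `t`. -/
def hasQFR {V : Type*} [Fintype V] (A : Matrix V V ℂ) (u v : V) (t : ℝ) : Prop :=
  u ≠ v ∧ ∃ α β : ℂ, β ≠ 0 ∧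
    (transMatrix A t) *ᵥ stdVec u = α • stdVec u + β • stdVec v

/-- The unitary Cayley graph of a commutative ring: distinct `a, b` are adjacent
iff `a - b` is a unit. -/
def unitaryCayleyGraph (R : Type*) [CommRing R] : SimpleGraph R where
  Adj a b := a ≠ b ∧ IsUnit (a - b)
  symm := ⟨by
    rintro a b ⟨h1, h2⟩
    refine ⟨h1.symm, ?_⟩
    rw [← neg_sub]
    exact h2.neg⟩
  loopless := ⟨fun a h => h.1 rfl⟩

/-- The adjacency matrix (over `ℂ`) of the unitary Cayley graph of `R`. -/
noncomputable def ucMatrix (R : Type*) [CommRing R] : Matrix R R ℂ :=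
  letI := Classical.decEq R
  letI := Classical.decRel (unitaryCayleyGraph R).Adj
  (unitaryCayleyGraph R).adjMatrix ℂ

/-- The adjacency matrix (over `ℂ`) of a simple graph. -/
noncomputable def adjMat {V : Type*} (G : SimpleGraph V) : Matrix V V ℂ :=
  letI := Classical.decEq V
  letI := Classical.decRel G.Adj
  G.adjMatrix ℂ

lemma stdVec_def {V : Type*} [inst : DecidableEq V] (u : V) :
    stdVec u = (Pi.single u 1 : V → ℂ) := by
  unfold stdVec
  rw [Subsingleton.elim (Classical.decEq V) inst]

lemma transMatrix_eq {V : Type*} [Fintype V] [inst : DecidableEq V]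
    (A : Matrix V V ℂ) (t : ℝ) :
    transMatrix A t = NormedSpace.exp ((Complex.I * (t : ℂ)) • A) := by
  unfold transMatrix
  rw [Subsingleton.elim (Classical.decEq V) inst]

lemma mul_exp_eigen {V : Type*} [Fintype V] [DecidableEq V]
    (P M : Matrix V V ℂ) (c : ℂ) (h : P * M = c • P) :
    P * NormedSpace.exp M = Complex.exp c • P := by
  letI : SeminormedRing (Matrix V V ℂ) := Matrix.linftyOpSemiNormedRing
  letI : NormedRing (Matrix V V ℂ) := Matrix.linftyOpNormedRing
  letI : NormedAlgebra ℂ (Matrix V V ℂ) := Matrix.linftyOpNormedAlgebra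
  have hpow : ∀ n : ℕ, P * M ^ n = c ^ n • P := by
    intro n
    induction n with
    | zero => simp
    | succ n ih =>
      rw [pow_succ, ← mul_assoc, ih, smul_mul_assoc, h, smul_smul, pow_succ]
  rw [NormedSpace.exp_eq_tsum ℂ]
  beta_reduce
  erw [← (NormedSpace.expSeries_summable' (𝕂 := ℂ) M).tsum_mul_left P]
  have : ∀ n : ℕ, P * (((n.factorial : ℂ))⁻¹ • M ^ n) = (((n.factorial : ℂ))⁻¹ * c ^ n) • P := by
    intro n
    rw [mul_smul_comm, hpow, smul_smul]
  simp_rw [this]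
  rw [Summable.tsum_smul_const]
  · congr 1
    rw [Complex.exp_eq_exp_ℂ, NormedSpace.exp_eq_tsum ℂ]
    simp_rw [smul_eq_mul]
  · simpa [smul_eq_mul] using NormedSpace.expSeries_summable' (𝕂 := ℂ) c

/-- if QFR occurs then `E_r e_v = (-Re(α/β) ± √(Re(α/β)² + 1)) E_r e_u`
for all `r`. -/
theorem qfr_projection_ratio {V : Type*} [Fintype V] [DecidableEq V]
    (G : SimpleGraph V)
    (K : ℕ) (θ : Fin K → ℝ) (E : Fin K → Matrix V V ℂ)
    (hdist : Function.Injective θ)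
    (hherm : ∀ r, (E r).IsHermitian)
    (horth : ∀ r s, r ≠ s → E r * E s = 0)
    (hidem : ∀ r, E r * E r = E r)
    (hsum : ∑ r, E r = (1 : Matrix V V ℂ))
    (hspec : ∑ r, (θ r : ℂ) • E r = adjMat G)
    (u v : V) (t : ℝ) (h : hasQFR (adjMat G) u v t) :
    ∃ α β : ℂ, β ≠ 0 ∧ ‖α‖ ^ 2 + ‖β‖ ^ 2 = 1 ∧
      ∀ r, ∃ ε : ℝ, (ε = 1 ∨ ε = -1) ∧
        E r *ᵥ stdVec v =
          (((-(α / β).re + ε * Real.sqrt ((α / β).re ^ 2 + 1) : ℝ) : ℂ)) •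
            (E r *ᵥ stdVec u) := by
  obtain ⟨huv, α, β, hβ, hqfr⟩ := h
  set A := adjMat G with hAdef
  -- A is Hermitian
  have hAH : Aᴴ = A := by
    rw [← hspec, Matrix.conjTranspose_sum]
    refine Finset.sum_congr rfl fun r _ => ?_
    rw [Matrix.conjTranspose_smul, (hherm r).eq]
    congr 1
    exact Complex.conj_ofReal _
  -- A is symmetric
  have hAsymm : Aᵀ = A := by
    ext i j
    show A j i = A i j
    simp only [hAdef, adjMat]
    by_cases hadj : G.Adj i j
    · rw [SimpleGraph.adjMatrix_apply, SimpleGraph.adjMatrix_apply, if_pos hadj,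
        if_pos (G.adj_symm hadj)]
    · rw [SimpleGraph.adjMatrix_apply, SimpleGraph.adjMatrix_apply, if_neg hadj,
        if_neg (fun h' => hadj (G.adj_symm h'))]
  have hEA : ∀ r, E r * A = (θ r : ℂ) • E r := by
    intro r
    rw [← hspec, Finset.mul_sum]
    rw [Finset.sum_eq_single r
      (fun s _ hs => by rw [mul_smul_comm, horth r s (Ne.symm hs), smul_zero])
      (fun hr => absurd (Finset.mem_univ r) hr)]
    rw [mul_smul_comm, hidem]
  have hθne : ∀ {r s : Fin K}, r ≠ s → (θ r : ℂ) ≠ (θ s : ℂ) := by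
    intro r s hrs hc
    exact hrs (hdist (by exact_mod_cast hc))
  have hEF0 : ∀ r s, r ≠ s → E r * (E s)ᵀ = 0 := by
    intro r s hrs
    have hAF : A * (E s)ᵀ = (θ s : ℂ) • (E s)ᵀ := by
      have h1 := congrArg Matrix.transpose (hEA s)
      rwa [Matrix.transpose_mul, hAsymm, Matrix.transpose_smul] at h1
    have h1 : E r * A * (E s)ᵀ = (θ r : ℂ) • (E r * (E s)ᵀ) := by
      rw [hEA r, smul_mul_assoc]
    have h2 : E r * A * (E s)ᵀ = (θ s : ℂ) • (E r * (E s)ᵀ) := by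
      rw [mul_assoc, hAF, mul_smul_comm]
    have h3 : ((θ r : ℂ) - θ s) • (E r * (E s)ᵀ) = 0 := by
      rw [sub_smul, ← h1, ← h2, sub_self]
    rcases smul_eq_zero.mp h3 with h4 | h4
    · exact absurd (sub_eq_zero.mp h4) (hθne hrs)
    · exact h4
  have hEt : ∀ r, (E r)ᵀ = E r := by
    intro r
    have hFsum : ∑ s, (E s)ᵀ = (1 : Matrix V V ℂ) := by
      rw [← Matrix.transpose_sum, hsum, Matrix.transpose_one]
    have h1 : E r * (E r)ᵀ = E r := by
      have h0 : E r * (∑ s, (E s)ᵀ) = E r := by rw [hFsum, mul_one]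
      rwa [Finset.mul_sum, Finset.sum_eq_single r
        (fun s _ hs => hEF0 r s (Ne.symm hs))
        (fun hr => absurd (Finset.mem_univ r) hr)] at h0
    have h2 : E r * (E r)ᵀ = (E r)ᵀ := by
      have h0 : (∑ s, E s) * (E r)ᵀ = (E r)ᵀ := by rw [hsum, one_mul]
      rwa [Finset.sum_mul, Finset.sum_eq_single r
        (fun s _ hs => hEF0 s r hs)
        (fun hr => absurd (Finset.mem_univ r) hr)] at h0
    rw [← h2, h1]
  have hre : ∀ (r) (i j : V), (starRingEnd ℂ) (E r i j) = E r i j := by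
    intro r i j
    have h1 : star (E r j i) = E r i j := congrFun (congrFun (hherm r) i) j
    have h2 : E r i j = E r j i := congrFun (congrFun (hEt r) j) i
    rw [starRingEnd_apply, h2]
    exact h1.trans h2
  have hcol : ∀ (M : Matrix V V ℂ) (w : V) (i : V), (M *ᵥ stdVec w) i = M i w := by
    intro M w i
    rw [stdVec_def, Matrix.mulVec_single]
    exact mul_one _
  -- eigen-relation for the transition matrix
  have hexpμ : ∀ r, E r * transMatrix A t = Complex.exp (Complex.I * t * θ r) • E r := by
    intro r
    have hEM : E r * ((Complex.I * (t : ℂ)) • A) = (Complex.I * t * θ r) • E r := by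
      rw [mul_smul_comm, hEA r, smul_smul]
    rw [transMatrix_eq]
    exact mul_exp_eigen (E r) ((Complex.I * (t : ℂ)) • A) _ hEM
  have hmain : ∀ r, Complex.exp (Complex.I * t * θ r) • (E r *ᵥ stdVec u)
      = α • (E r *ᵥ stdVec u) + β • (E r *ᵥ stdVec v) := by
    intro r
    have h1 : E r *ᵥ (transMatrix A t *ᵥ stdVec u)
        = Complex.exp (Complex.I * t * θ r) • (E r *ᵥ stdVec u) := by
      rw [Matrix.mulVec_mulVec, hexpμ r, Matrix.smul_mulVec]
    rw [hqfr] at h1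
    rw [← h1, Matrix.mulVec_add, Matrix.mulVec_smul, Matrix.mulVec_smul]
  -- unitarity
  have hMH : ((Complex.I * (t : ℂ)) • A)ᴴ = -((Complex.I * (t : ℂ)) • A) := by
    rw [Matrix.conjTranspose_smul, hAH, ← neg_smul]
    congr 1
    rw [← starRingEnd_apply, _root_.map_mul, Complex.conj_I, Complex.conj_ofReal]
    ring
  have hunit : (transMatrix A t)ᴴ * transMatrix A t = 1 := by
    rw [transMatrix_eq]
    rw [← Matrix.exp_conjTranspose, hMH,
      ← Matrix.exp_add_of_commute (-((Complex.I * (t : ℂ)) • A)) ((Complex.I * (t : ℂ)) • A) (Commute.neg_left (Commute.refl _)),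
      neg_add_cancel, NormedSpace.exp_zero]
  have hsingle_star : ∀ (w : V), star ((Pi.single w 1 : V → ℂ)) = Pi.single w 1 := by
    intro w
    ext i
    simp [Pi.single_apply, apply_ite (star : ℂ → ℂ)]
  have hone : star (stdVec u) ⬝ᵥ stdVec u = (1 : ℂ) := by
    rw [stdVec_def, hsingle_star, single_dotProduct, Pi.single_apply]
    simp
  have h1 : star (transMatrix A t *ᵥ stdVec u) ⬝ᵥ (transMatrix A t *ᵥ stdVec u) = 1 := by
    rw [Matrix.star_mulVec, Matrix.dotProduct_mulVec, Matrix.vecMul_vecMul, hunit,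
      Matrix.vecMul_one, hone]
  have hnorm : (starRingEnd ℂ) α * α + (starRingEnd ℂ) β * β = 1 := by
    rw [hqfr, stdVec_def, stdVec_def] at h1
    simp only [star_add, star_smul, add_dotProduct, dotProduct_add,
      smul_dotProduct, dotProduct_smul, hsingle_star,
      single_dotProduct, smul_eq_mul, one_mul, Pi.smul_apply, Pi.single_apply,
      Pi.add_apply] at h1
    simp only [if_pos rfl, if_neg huv, if_neg (Ne.symm huv), mul_zero, mul_one, add_zero,
      zero_add, smul_eq_mul, if_true, eq_self_iff_true, ← starRingEnd_apply] at h1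
    linear_combination h1
  have goal1 : ‖α‖ ^ 2 + ‖β‖ ^ 2 = 1 := by
    have ha : (starRingEnd ℂ) α * α = ((‖α‖ ^ 2 : ℝ) : ℂ) := by
      rw [mul_comm, Complex.mul_conj, Complex.normSq_eq_norm_sq]
    have hb : (starRingEnd ℂ) β * β = ((‖β‖ ^ 2 : ℝ) : ℂ) := by
      rw [mul_comm, Complex.mul_conj, Complex.normSq_eq_norm_sq]
    rw [ha, hb] at hnorm
    exact_mod_cast hnorm
  refine ⟨α, β, hβ, goal1, fun r => ?_⟩
  by_cases hx0 : E r *ᵥ stdVec u = 0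
  · refine ⟨1, Or.inl rfl, ?_⟩
    have h1 := hmain r
    rw [hx0] at h1
    simp only [smul_zero, zero_add] at h1
    have h2 : E r *ᵥ stdVec v = 0 := by
      rcases smul_eq_zero.mp h1.symm with h' | h'
      · exact absurd h' hβ
      · exact h'
    rw [h2, hx0, smul_zero]
  · obtain ⟨i0, hi0⟩ : ∃ i, (E r *ᵥ stdVec u) i ≠ 0 := by
      by_contra hc
      push_neg at hc
      exact hx0 (funext hc)
    set μ := Complex.exp (Complex.I * t * θ r) with hμdef
    have hμc : (starRingEnd ℂ) μ = Complex.exp (-(Complex.I * t * θ r)) := by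
      rw [hμdef, ← Complex.exp_conj]
      congr 1
      rw [_root_.map_mul, _root_.map_mul, Complex.conj_I, Complex.conj_ofReal,
        Complex.conj_ofReal]
      ring
    have hμ : μ * (starRingEnd ℂ) μ = 1 := by
      rw [hμc, hμdef, ← Complex.exp_add, add_neg_cancel, Complex.exp_zero]
    have hy : E r *ᵥ stdVec v = ((μ - α) / β) • (E r *ᵥ stdVec u) := by
      have h1 : β • (E r *ᵥ stdVec v) = (μ - α) • (E r *ᵥ stdVec u) := by
        rw [sub_smul, ← hμdef] at *
        rw [hmain r]
        abel
      have h2 := congrArg (fun w => β⁻¹ • w) h1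
      beta_reduce at h2
      rw [smul_smul, inv_mul_cancel₀ hβ, one_smul, smul_smul] at h2
      rw [h2, div_eq_inv_mul]
    set lc : ℂ := (μ - α) / β with hlc
    have hxre : (starRingEnd ℂ) ((E r *ᵥ stdVec u) i0) = (E r *ᵥ stdVec u) i0 := by
      rw [hcol (E r) u i0]
      exact hre r i0 u
    have hyre : (starRingEnd ℂ) ((E r *ᵥ stdVec v) i0) = (E r *ᵥ stdVec v) i0 := by
      rw [hcol (E r) v i0]
      exact hre r i0 v
    have hyx : (E r *ᵥ stdVec v) i0 = lc * (E r *ᵥ stdVec u) i0 := by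
      rw [hy]
      rfl
    have hlcre : (starRingEnd ℂ) lc = lc := by
      have h1 := congrArg (starRingEnd ℂ) hyx
      rw [_root_.map_mul, hxre, hyre] at h1
      exact mul_right_cancel₀ hi0 (h1.symm.trans hyx)
    set l : ℝ := lc.re with hl
    have hlcl : lc = (l : ℂ) := (Complex.conj_eq_iff_re.mp hlcre).symm
    set c : ℝ := (α / β).re with hc
    have hβc : (starRingEnd ℂ) β ≠ 0 := by simpa using hβ
    have h2c : α * (starRingEnd ℂ) β + β * (starRingEnd ℂ) α
        = 2 * (c : ℂ) * (β * (starRingEnd ℂ) β) := by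
      have h1 : α / β + (starRingEnd ℂ) (α / β) = 2 * (c : ℂ) := by
        rw [Complex.add_conj]
        push_cast
        rw [hc]
      rw [map_div₀] at h1
      field_simp at h1
      linear_combination h1
    have hμeq : μ = α + β * (l : ℂ) := by
      rw [← hlcl, hlc, mul_comm, div_mul_cancel₀ _ hβ]
      ring
    have hμexp : (α + β * (l : ℂ)) * ((starRingEnd ℂ) α + (starRingEnd ℂ) β * (l : ℂ)) = 1 := by
      have h1 : (starRingEnd ℂ) μ = (starRingEnd ℂ) α + (starRingEnd ℂ) β * (l : ℂ) := by
        rw [hμeq, map_add, _root_.map_mul, Complex.conj_ofReal]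
      rw [← h1, ← hμeq]
      exact hμ
    have hquad : ((l : ℂ) ^ 2 + 2 * (c : ℂ) * (l : ℂ) - 1) * (β * (starRingEnd ℂ) β) = 0 := by
      linear_combination hμexp - hnorm - (l : ℂ) * h2c
    have hquadC : ((l : ℂ) ^ 2 + 2 * (c : ℂ) * (l : ℂ) - 1) = 0 := by
      rcases mul_eq_zero.mp hquad with h' | h'
      · exact h'
      · exact absurd h' (mul_ne_zero hβ hβc)
    have hquadR : l ^ 2 + 2 * c * l - 1 = 0 := by exact_mod_cast hquadC
    have hs1 : (0 : ℝ) < c ^ 2 + 1 := by positivity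
    set s := Real.sqrt (c ^ 2 + 1) with hsdef
    have hs2 : s ^ 2 = c ^ 2 + 1 := Real.sq_sqrt hs1.le
    have hspos : 0 < s := Real.sqrt_pos.mpr hs1
    refine ⟨(l + c) / s, ?_, ?_⟩
    · have hε2 : ((l + c) / s) ^ 2 = 1 := by
        rw [div_pow, hs2]
        have h' : (l + c) ^ 2 = c ^ 2 + 1 := by nlinarith [hquadR]
        rw [h']
        field_simp
      rcases mul_eq_zero.mp
          (show ((l + c) / s - 1) * ((l + c) / s + 1) = 0 by linear_combination hε2) with h' | h'
      · exact Or.inl (by linarith)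
      · exact Or.inr (by linarith)
    · have hval : -c + (l + c) / s * s = l := by
        rw [div_mul_cancel₀ _ (ne_of_gt hspos)]
        ring
      rw [hy, hlcl]
      congr 1
      exact_mod_cast (congrArg (fun x : ℝ => (x : ℂ)) hval).symm
end

section
/- Let F be a finite field of odd cardinality q. Then for every integer k, the unitary Cayley graph of the product ring F × (ℤ/2ℤ)[x]/(x²) does not have quantum fractional revival from any vertex u to any vertex v at time τ = kπ/q. -/
open Matrix

instance : Fintype (DualNumber (ZMod 2)) :=
  inferInstanceAs (Fintype (ZMod 2 × ZMod 2))

open Kronecker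

section Aux

lemma sum_zmod2 {M : Type*} [AddCommMonoid M] (f : ZMod 2 → M) : ∑ w, f w = f 0 + f 1 := by
  have h : (Finset.univ : Finset (ZMod 2)) = {0, 1} := by decide
  rw [h, Finset.sum_insert (by decide), Finset.sum_singleton]

lemma sum_dual {M : Type*} [AddCommMonoid M] (f : ZMod 2 → M) :
    ∑ w : DualNumber (ZMod 2), f w.fst = f 0 + f 0 + (f 1 + f 1) := by
  rw [Fintype.sum_equiv
    (⟨fun w => (w.fst, w.snd), fun p => ⟨p.1, p.2⟩, fun _ => rfl, fun _ => rfl⟩ :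
      DualNumber (ZMod 2) ≃ ZMod 2 × ZMod 2)
    (fun w => f w.fst) (fun p => f p.1) (fun _ => rfl)]
  rw [Fintype.sum_prod_type]
  rw [sum_zmod2 (fun i => ∑ _j : ZMod 2, f i)]
  rw [sum_zmod2 (fun _ => f 0), sum_zmod2 (fun _ => f 1)]

lemma my_isUnit_prod {M N : Type*} [Monoid M] [Monoid N] (p : M × N) :
    IsUnit p ↔ IsUnit p.1 ∧ IsUnit p.2 := by
  constructor
  · intro h; exact ⟨h.map (MonoidHom.fst M N), h.map (MonoidHom.snd M N)⟩
  · rintro ⟨⟨a, ha⟩, ⟨b, hb⟩⟩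
    refine ⟨⟨p, ((↑a⁻¹ : M), (↑b⁻¹ : N)), ?_, ?_⟩, rfl⟩ <;>
      refine Prod.ext ?_ ?_ <;> simp [← ha, ← hb]

/-- The `C_4`-like factor: adjacency matrix of the unitary Cayley graph of the
dual numbers over `ℤ/2`. -/
noncomputable def Bm : Matrix (DualNumber (ZMod 2)) (DualNumber (ZMod 2)) ℂ :=
  Matrix.of fun x y => if x.fst = y.fst then 0 else 1

noncomputable def Bm2 : Matrix (DualNumber (ZMod 2)) (DualNumber (ZMod 2)) ℂ :=
  Matrix.of fun x y => if x.fst = y.fst then 2 else 0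

lemma hBB : Bm * Bm = Bm2 := by
  ext x y
  rw [Matrix.mul_apply]
  simp only [Bm, Bm2, Matrix.of_apply]
  rw [sum_dual (fun j => (if x.fst = j then (0:ℂ) else 1) * (if j = y.fst then 0 else 1))]
  have hc : ∀ i : ZMod 2, i = 0 ∨ i = 1 := by decide
  have h01 : (0 : ZMod 2) ≠ 1 := by decide
  have h10 : (1 : ZMod 2) ≠ 0 := by decide
  rcases hc x.fst with h | h <;> rcases hc y.fst with h' | h' <;>
    rw [h, h'] <;> simp [h01, h10] <;> norm_num

lemma hB2B : Bm2 * Bm = (4 : ℂ) • Bm := by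
  ext x y
  rw [Matrix.mul_apply]
  simp only [Bm, Bm2, Matrix.of_apply, Matrix.smul_apply, smul_eq_mul]
  rw [sum_dual (fun j => (if x.fst = j then (2:ℂ) else 0) * (if j = y.fst then 0 else 1))]
  have hc : ∀ i : ZMod 2, i = 0 ∨ i = 1 := by decide
  have h01 : (0 : ZMod 2) ≠ 1 := by decide
  have h10 : (1 : ZMod 2) ≠ 0 := by decide
  rcases hc x.fst with h | h <;> rcases hc y.fst with h' | h' <;>
    rw [h, h'] <;> simp [h01, h10] <;> norm_num

/-- Complete-graph adjacency matrix. -/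
noncomputable def Km (F : Type*) [DecidableEq F] : Matrix F F ℂ :=
  Matrix.of fun a b => if a = b then 0 else 1

/-- All-ones matrix. -/
noncomputable def Jmat (F : Type*) : Matrix F F ℂ :=
  Matrix.of fun _ _ => 1

lemma hKJ (F : Type*) [DecidableEq F] : Km F + 1 = Jmat F := by
  ext a b
  by_cases h : a = b <;> simp [Km, Jmat, Matrix.one_apply, h]

lemma hJJ (F : Type*) [Fintype F] : Jmat F * Jmat F = (Fintype.card F : ℂ) • Jmat F := by
  ext a b
  simp [Jmat, Matrix.mul_apply, Finset.card_univ]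

lemma exp_smul_idem {n : Type*} [Fintype n] [DecidableEq n] (E : Matrix n n ℂ)
    (hE : E * E = E) (w : ℂ) :
    NormedSpace.exp (w • E) = 1 + (Complex.exp w - 1) • E := by
  letI : SeminormedRing (Matrix n n ℂ) := Matrix.linftyOpSemiNormedRing
  letI : NormedRing (Matrix n n ℂ) := Matrix.linftyOpNormedRing
  letI : NormedAlgebra ℂ (Matrix n n ℂ) := Matrix.linftyOpNormedAlgebra
  have hFF : (1 - E) * (1 - E) = 1 - E := by
    have : (1 - E) * (1 - E) = 1 - E - E + E * E := by noncomm_ring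
    rw [this, hE]; abel
  have hEF : E * (1 - E) = 0 := by rw [mul_sub, mul_one, hE, sub_self]
  have hFE : (1 - E) * E = 0 := by rw [sub_mul, one_mul, hE, sub_self]
  let φ : (ℂ × ℂ) →ₐ[ℂ] Matrix n n ℂ :=
  { toFun := fun p => p.1 • E + p.2 • (1 - E)
    map_one' := by
      show (1 : ℂ) • E + (1 : ℂ) • (1 - E) = 1
      rw [one_smul, one_smul]; abel
    map_mul' := fun p r => by
      show (p.1 * r.1) • E + (p.2 * r.2) • (1 - E) =
        (p.1 • E + p.2 • (1 - E)) * (r.1 • E + r.2 • (1 - E))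
      rw [add_mul, mul_add, mul_add, smul_mul_assoc, smul_mul_assoc, smul_mul_assoc,
        smul_mul_assoc, mul_smul_comm, mul_smul_comm, mul_smul_comm, mul_smul_comm,
        hE, hEF, hFE, hFF]
      simp [smul_smul]
    map_zero' := by simp
    map_add' := fun p r => by
      show (p.1 + r.1) • E + (p.2 + r.2) • (1 - E) = _
      rw [add_smul, add_smul]; abel
    commutes' := fun c => by
      show c • E + c • (1 - E) = _
      rw [← smul_add, Algebra.algebraMap_eq_smul_one]
      congr 1; abel }
  have hφ : Continuous φ := by
    show Continuous fun p : ℂ × ℂ => p.1 • E + p.2 • (1 - E)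
    exact (continuous_fst.smul continuous_const).add (continuous_snd.smul continuous_const)
  have h1 : φ ((w, 0) : ℂ × ℂ) = w • E := by
    show w • E + (0 : ℂ) • (1 - E) = w • E; simp
  have h2 : NormedSpace.exp ((w, 0) : ℂ × ℂ) = (Complex.exp w, 1) := by
    ext
    · rw [Prod.fst_exp]; exact (congrFun Complex.exp_eq_exp_ℂ w).symm
    · rw [Prod.snd_exp]; exact NormedSpace.exp_zero
  have main : NormedSpace.exp (w • E) = 1 + (Complex.exp w - 1) • E := by
    rw [← h1]
    erw [← NormedSpace.map_exp φ hφ, h2]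
    show (Complex.exp w) • E + (1 : ℂ) • (1 - E) = 1 + (Complex.exp w - 1) • E
    rw [one_smul, sub_smul, one_smul]; abel
  exact main

lemma exp_smul_cube {n : Type*} [Fintype n] [DecidableEq n] (M : Matrix n n ℂ) (c : ℂ)
    (hc : c ≠ 0) (h3 : M * M * M = (c * c) • M) (w : ℂ) :
    NormedSpace.exp (w • M) =
      1 + ((Complex.exp (w * c) - 1) * (2 * c * c)⁻¹) • (M * M + c • M)
        + ((Complex.exp (-(w * c)) - 1) * (2 * c * c)⁻¹) • (M * M - c • M) := by
  have h4 : M * M * (M * M) = (c * c) • (M * M) := by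
    rw [← mul_assoc, h3, smul_mul_assoc]
  have hma : M * (M * M) = M * M * M := (mul_assoc M M M).symm
  have hPP : (M * M + c • M) * (M * M + c • M) = (2 * c * c) • (M * M + c • M) := by
    simp only [mul_add, add_mul, smul_mul_assoc, mul_smul_comm, smul_smul, hma, h3, h4]
    match_scalars <;> ring
  have hQQ : (M * M - c • M) * (M * M - c • M) = (2 * c * c) • (M * M - c • M) := by
    simp only [mul_sub, sub_mul, smul_mul_assoc, mul_smul_comm, smul_smul, hma, h3, h4]
    match_scalars <;> ring
  have hPQ : (M * M + c • M) * (M * M - c • M) = 0 := by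
    simp only [mul_sub, sub_mul, mul_add, add_mul, smul_mul_assoc, mul_smul_comm, smul_smul,
      hma, h3, h4]
    match_scalars <;> ring
  have hQP : (M * M - c • M) * (M * M + c • M) = 0 := by
    simp only [mul_sub, sub_mul, mul_add, add_mul, smul_mul_assoc, mul_smul_comm, smul_smul,
      hma, h3, h4]
    match_scalars <;> ring
  obtain ⟨r, hr⟩ : ∃ r : ℂ, r = (2 * c * c)⁻¹ := ⟨_, rfl⟩
  have hrr : r * (2 * c * c) = 1 := by rw [hr]; field_simp
  have hEpEp : r • (M * M + c • M) * (r • (M * M + c • M)) = r • (M * M + c • M) := by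
    rw [smul_mul_assoc, mul_smul_comm, hPP, smul_smul, smul_smul, mul_assoc, hrr, mul_one]
  have hEmEm : r • (M * M - c • M) * (r • (M * M - c • M)) = r • (M * M - c • M) := by
    rw [smul_mul_assoc, mul_smul_comm, hQQ, smul_smul, smul_smul, mul_assoc, hrr, mul_one]
  have hEpEm : r • (M * M + c • M) * (r • (M * M - c • M)) = 0 := by
    rw [smul_mul_assoc, mul_smul_comm, hPQ, smul_zero, smul_zero]
  have hEmEp : r • (M * M - c • M) * (r • (M * M + c • M)) = 0 := by
    rw [smul_mul_assoc, mul_smul_comm, hQP, smul_zero, smul_zero]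
  have hdecomp : w • M =
      (w * c) • (r • (M * M + c • M)) + (-(w * c)) • (r • (M * M - c • M)) := by
    match_scalars
    · linear_combination (-w) * hrr
    · ring
  have hcomm : Commute ((w * c) • (r • (M * M + c • M)))
      ((-(w * c)) • (r • (M * M - c • M))) := by
    have hc' : Commute (r • (M * M + c • M)) (r • (M * M - c • M)) := by
      unfold Commute SemiconjBy; rw [hEpEm, hEmEp]
    exact (hc'.smul_left (w * c)).smul_right (-(w * c))
  rw [hdecomp, Matrix.exp_add_of_commute _ _ hcomm,
    exp_smul_idem _ hEpEp, exp_smul_idem _ hEmEm]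
  have hzero : (Complex.exp (w * c) - 1) • (r • (M * M + c • M)) *
      ((Complex.exp (-(w * c)) - 1) • (r • (M * M - c • M))) = 0 := by
    rw [smul_mul_assoc, mul_smul_comm, hEpEm, smul_zero, smul_zero]
  simp only [mul_add, add_mul, mul_one, one_mul, hzero, add_zero]
  rw [smul_smul, smul_smul]
  rw [hr]

lemma h_ucm (F : Type*) [Field F] [Fintype F] [DecidableEq F] :
    ucMatrix (F × DualNumber (ZMod 2)) = Km F ⊗ₖ Bm := by
  ext ⟨a, x⟩ ⟨b, y⟩
  unfold ucMatrix
  rw [SimpleGraph.adjMatrix_apply, Matrix.kroneckerMap_apply]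
  simp only [Km, Bm, Matrix.of_apply]
  have hAdj : (unitaryCayleyGraph (F × DualNumber (ZMod 2))).Adj (a,x) (b,y) ↔
      (¬ a = b ∧ ¬ x.fst = y.fst) := by
    show ((a,x) ≠ (b,y) ∧ IsUnit ((a,x) - (b,y))) ↔ _
    rw [my_isUnit_prod]
    constructor
    · rintro ⟨-, h1, h2⟩
      constructor
      · intro hab
        rw [show ((a,x) - (b,y)).1 = a - b from rfl, hab, sub_self] at h1
        exact zero_ne_one (isUnit_zero_iff.mp h1)
      · intro hxy
        rw [show ((a,x) - (b,y)).2 = x - y from rfl,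
          TrivSqZeroExt.isUnit_iff_isUnit_fst, TrivSqZeroExt.fst_sub, hxy, sub_self] at h2
        exact zero_ne_one (isUnit_zero_iff.mp h2)
    · rintro ⟨hab, hxy⟩
      refine ⟨fun h => hab (congrArg Prod.fst h), ?_, ?_⟩
      · show IsUnit (a - b)
        exact isUnit_iff_ne_zero.mpr (sub_ne_zero.mpr hab)
      · show IsUnit ((x : DualNumber (ZMod 2)) - y)
        rw [TrivSqZeroExt.isUnit_iff_isUnit_fst, TrivSqZeroExt.fst_sub]
        exact isUnit_iff_ne_zero.mpr (sub_ne_zero.mpr hxy)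
  by_cases hA : (unitaryCayleyGraph (F × DualNumber (ZMod 2))).Adj (a, x) (b, y)
  · rw [if_pos hA]
    obtain ⟨hab, hxy⟩ := hAdj.mp hA
    rw [if_neg hab, if_neg hxy, one_mul]
  · rw [if_neg hA]
    rw [hAdj] at hA
    by_cases h1 : a = b
    · rw [if_pos h1, zero_mul]
    · have h2 : x.fst = y.fst := by
        by_contra h2
        exact hA ⟨h1, h2⟩
      rw [if_neg h1, if_pos h2, mul_zero]

lemma stdVec_apply {V : Type*} [DecidableEq V] (u p : V) : stdVec u p = if p = u then 1 else 0 := by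
  unfold stdVec
  rcases eq_or_ne p u with h | h
  · subst h; rw [if_pos rfl]
    exact @Pi.single_eq_same V (fun _ => ℂ) (fun _ => inferInstance) (Classical.decEq V) p 1
  · rw [if_neg h]
    exact @Pi.single_eq_of_ne V (fun _ => ℂ) (fun _ => inferInstance) (Classical.decEq V) u p h 1

lemma zmod2_succ_ne (j : ZMod 2) : j + 1 ≠ j := by revert j; decide

lemma dd1 (y : DualNumber (ZMod 2)) : y + 1 ≠ y := by
  intro h
  have := congrArg TrivSqZeroExt.fst h
  rw [TrivSqZeroExt.fst_add, TrivSqZeroExt.fst_one] at this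
  exact zmod2_succ_ne _ this

lemma dd2 (y : DualNumber (ZMod 2)) : y + DualNumber.eps ≠ y := by
  intro h
  have := congrArg TrivSqZeroExt.snd h
  rw [TrivSqZeroExt.snd_add, DualNumber.snd_eps] at this
  exact zmod2_succ_ne _ this

lemma dd3 (y : DualNumber (ZMod 2)) : y + (1 + DualNumber.eps) ≠ y := by
  intro h
  have := congrArg TrivSqZeroExt.fst h
  rw [TrivSqZeroExt.fst_add, TrivSqZeroExt.fst_add, TrivSqZeroExt.fst_one,
    DualNumber.fst_eps, add_zero] at this
  exact zmod2_succ_ne _ this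

lemma dd4 (y : DualNumber (ZMod 2)) : y + 1 ≠ y + (1 + DualNumber.eps) := by
  intro h
  have := congrArg TrivSqZeroExt.snd h
  rw [TrivSqZeroExt.snd_add, TrivSqZeroExt.snd_add, TrivSqZeroExt.snd_one,
    TrivSqZeroExt.snd_add, TrivSqZeroExt.snd_one, DualNumber.snd_eps, add_zero,
    zero_add] at this
  exact zmod2_succ_ne _ this.symm

lemma fst_add_eps (y : DualNumber (ZMod 2)) : (y + DualNumber.eps).fst = y.fst := by
  rw [TrivSqZeroExt.fst_add, DualNumber.fst_eps, add_zero]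

lemma fst_add_one (y : DualNumber (ZMod 2)) : (y + 1).fst = y.fst + 1 := by
  rw [TrivSqZeroExt.fst_add, TrivSqZeroExt.fst_one]

lemma fst_add_one_eps (y : DualNumber (ZMod 2)) :
    (y + (1 + DualNumber.eps)).fst = y.fst + 1 := by
  rw [TrivSqZeroExt.fst_add, TrivSqZeroExt.fst_add, TrivSqZeroExt.fst_one,
    DualNumber.fst_eps, add_zero]

end Aux

/-- for a finite field `F` of odd cardinality `q`, the unitary Cayley graph
of `F × (ℤ/2)[x]/(x²)` has no QFR at any time `kπ/q`, `k ∈ ℤ`. -/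
theorem no_qfr_field_times_dual_numbers (F : Type*) [Field F] [Fintype F] (q : ℕ)
    (hq : Fintype.card F = q) (hodd : Odd q) (k : ℤ)
    (u v : F × DualNumber (ZMod 2)) :
    ¬ hasQFR (ucMatrix (F × DualNumber (ZMod 2))) u v ((k : ℝ) * Real.pi / q) := by
  intro h
  letI dF : DecidableEq F := Classical.decEq F
  letI dV : DecidableEq (F × DualNumber (ZMod 2)) := Classical.decEq _
  set t : ℝ := (k : ℝ) * Real.pi / q with ht
  obtain ⟨hne, α, β, hβ, heq⟩ := h
  set z : ℂ := Complex.I * (t : ℂ) with hz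
  have hq0 : q ≠ 0 := by rintro rfl; exact (Nat.not_odd_iff_even.mpr Even.zero) hodd
  have hq0' : (q : ℂ) ≠ 0 := Nat.cast_ne_zero.mpr hq0
  have hqR : (q : ℝ) ≠ 0 := Nat.cast_ne_zero.mpr hq0
  -- the scalar exponentials
  have harg : z * (2 * (q : ℂ)) = (k : ℂ) * (2 * (Real.pi : ℂ) * Complex.I) := by
    rw [hz, ht]
    push_cast
    field_simp
  have hz1 : Complex.exp (z * (2 * (q : ℂ))) = 1 := by
    rw [harg]; exact Complex.exp_int_mul_two_pi_mul_I k
  have hz2 : Complex.exp (-(z * (2 * (q : ℂ)))) = 1 := by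
    rw [Complex.exp_neg, hz1, inv_one]
  -- cube identities
  have hC3 : (Jmat F ⊗ₖ Bm) * (Jmat F ⊗ₖ Bm) * (Jmat F ⊗ₖ Bm)
      = ((2 * (q : ℂ)) * (2 * (q : ℂ))) • (Jmat F ⊗ₖ Bm) := by
    rw [← Matrix.mul_kronecker_mul, ← Matrix.mul_kronecker_mul, hBB, hB2B, hJJ, hq,
      smul_mul_assoc, hJJ, hq, Matrix.smul_kronecker, Matrix.smul_kronecker,
      Matrix.kronecker_smul, smul_smul, smul_smul]
    match_scalars
    ring
  have hN3 : ((1 : Matrix F F ℂ) ⊗ₖ Bm) * ((1 : Matrix F F ℂ) ⊗ₖ Bm) *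
      ((1 : Matrix F F ℂ) ⊗ₖ Bm) = ((2 : ℂ) * 2) • ((1 : Matrix F F ℂ) ⊗ₖ Bm) := by
    rw [← Matrix.mul_kronecker_mul, ← Matrix.mul_kronecker_mul, one_mul, one_mul, hBB, hB2B,
      Matrix.kronecker_smul]
    match_scalars
    norm_num
  have hNN : ((1 : Matrix F F ℂ) ⊗ₖ Bm) * ((1 : Matrix F F ℂ) ⊗ₖ Bm)
      = (1 : Matrix F F ℂ) ⊗ₖ Bm2 := by
    rw [← Matrix.mul_kronecker_mul, one_mul, hBB]
  have hApN : (Km F ⊗ₖ Bm) + ((1 : Matrix F F ℂ) ⊗ₖ Bm) = Jmat F ⊗ₖ Bm := by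
    rw [← Matrix.add_kronecker, hKJ]
  have hANc : Commute (z • (Km F ⊗ₖ Bm)) (z • ((1 : Matrix F F ℂ) ⊗ₖ Bm)) := by
    have hcn : Commute (Km F ⊗ₖ Bm) ((1 : Matrix F F ℂ) ⊗ₖ Bm) := by
      unfold Commute SemiconjBy
      rw [← Matrix.mul_kronecker_mul, ← Matrix.mul_kronecker_mul, one_mul, mul_one]
    exact (hcn.smul_left z).smul_right z
  have h2q0 : (2 * (q : ℂ)) ≠ 0 := mul_ne_zero two_ne_zero hq0'
  have hCexp : NormedSpace.exp (z • (Jmat F ⊗ₖ Bm)) = 1 := by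
    rw [exp_smul_cube _ (2 * (q : ℂ)) h2q0 hC3 z, hz1, hz2]
    simp
  have hprod : NormedSpace.exp (z • (Km F ⊗ₖ Bm)) *
      NormedSpace.exp (z • ((1 : Matrix F F ℂ) ⊗ₖ Bm)) = 1 := by
    rw [← Matrix.exp_add_of_commute _ _ hANc, ← smul_add, hApN, hCexp]
  have hNinv : NormedSpace.exp (z • ((1 : Matrix F F ℂ) ⊗ₖ Bm)) *
      NormedSpace.exp ((-z) • ((1 : Matrix F F ℂ) ⊗ₖ Bm)) = 1 := by
    rw [← Matrix.exp_add_of_commute _ _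
      (((Commute.refl ((1 : Matrix F F ℂ) ⊗ₖ Bm)).smul_left z).smul_right (-z)),
      ← add_smul, add_neg_cancel, zero_smul, NormedSpace.exp_zero]
  have hAexp : NormedSpace.exp (z • (Km F ⊗ₖ Bm))
      = NormedSpace.exp ((-z) • ((1 : Matrix F F ℂ) ⊗ₖ Bm)) := by
    calc NormedSpace.exp (z • (Km F ⊗ₖ Bm))
        = NormedSpace.exp (z • (Km F ⊗ₖ Bm)) *
          (NormedSpace.exp (z • ((1 : Matrix F F ℂ) ⊗ₖ Bm)) *
           NormedSpace.exp ((-z) • ((1 : Matrix F F ℂ) ⊗ₖ Bm))) := by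
          rw [hNinv, mul_one]
      _ = (NormedSpace.exp (z • (Km F ⊗ₖ Bm)) *
           NormedSpace.exp (z • ((1 : Matrix F F ℂ) ⊗ₖ Bm))) *
           NormedSpace.exp ((-z) • ((1 : Matrix F F ℂ) ⊗ₖ Bm)) := (mul_assoc _ _ _).symm
      _ = NormedSpace.exp ((-z) • ((1 : Matrix F F ℂ) ⊗ₖ Bm)) := by
          rw [hprod, one_mul]
  set ζ : ℂ := Complex.exp (z * 2) with hζdef
  have hε1 : Complex.exp (-z * 2) = ζ⁻¹ := by
    rw [show (-z) * 2 = -(z * 2) by ring, Complex.exp_neg]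
  have hε2 : Complex.exp (-(-z * 2)) = ζ := by
    rw [show -((-z) * 2) = z * 2 by ring]
  have hNform : NormedSpace.exp ((-z) • ((1 : Matrix F F ℂ) ⊗ₖ Bm))
      = 1 + ((ζ⁻¹ - 1) * (2 * 2 * 2 : ℂ)⁻¹) •
          ((1 : Matrix F F ℂ) ⊗ₖ Bm2 + (2 : ℂ) • ((1 : Matrix F F ℂ) ⊗ₖ Bm))
        + ((ζ - 1) * (2 * 2 * 2 : ℂ)⁻¹) •
          ((1 : Matrix F F ℂ) ⊗ₖ Bm2 - (2 : ℂ) • ((1 : Matrix F F ℂ) ⊗ₖ Bm)) := by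
    rw [exp_smul_cube _ 2 two_ne_zero hN3 (-z), hε1, hε2, hNN]
  have htrans : transMatrix (ucMatrix (F × DualNumber (ZMod 2))) t
      = NormedSpace.exp (z • (Km F ⊗ₖ Bm)) := by
    rw [← h_ucm F]
    rfl
  rw [htrans, hAexp, hNform] at heq
  -- entrywise evaluation
  obtain ⟨b0, y⟩ := u
  have hval : ∀ (a : F) (x : DualNumber (ZMod 2)),
      (if ((a, x) : F × DualNumber (ZMod 2)) = (b0, y) then (1 : ℂ) else 0)
        + (ζ⁻¹ - 1) * (2 * 2 * 2 : ℂ)⁻¹ *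
            ((if a = b0 then (1 : ℂ) else 0) * (if x.fst = y.fst then 2 else 0)
              + 2 * ((if a = b0 then (1 : ℂ) else 0) * (if x.fst = y.fst then 0 else 1)))
        + (ζ - 1) * (2 * 2 * 2 : ℂ)⁻¹ *
            ((if a = b0 then (1 : ℂ) else 0) * (if x.fst = y.fst then 2 else 0)
              - 2 * ((if a = b0 then (1 : ℂ) else 0) * (if x.fst = y.fst then 0 else 1)))
      = (if ((a, x) : F × DualNumber (ZMod 2)) = (b0, y) then α else 0)
        + (if ((a, x) : F × DualNumber (ZMod 2)) = v then β else 0) := by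
    intro a x
    have hp := congrFun heq (a, x)
    simp only [Matrix.mulVec, dotProduct, Pi.add_apply, Pi.smul_apply, smul_eq_mul,
      stdVec_apply, mul_ite, mul_one, mul_zero, Finset.sum_ite_eq',
      Finset.mem_univ, if_true] at hp
    rw [← hp]
    simp only [Matrix.add_apply, Matrix.sub_apply, Matrix.smul_apply, Matrix.one_apply,
      Matrix.kroneckerMap_apply, Bm, Bm2, Matrix.of_apply, smul_eq_mul]
    try ring
  -- case split on ζ = 1
  rcases eq_or_ne ζ 1 with hζ1 | hζ1
  · have hv := hval v.1 v.2
    rw [Prod.mk.eta] at hv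
    rw [if_neg (Ne.symm hne), if_neg (Ne.symm hne), if_pos rfl, hζ1] at hv
    norm_num at hv
    exact hβ hv.symm
  · have hζ0 : ζ ≠ 0 := Complex.exp_ne_zero _
    have hζq : ζ ^ q = 1 := by
      rw [hζdef, ← Complex.exp_nat_mul, show (q : ℂ) * (z * 2) = z * (2 * (q : ℂ)) by ring,
        hz1]
    have hζm1 : ζ ≠ -1 := by
      intro hm
      rw [hm, Odd.neg_one_pow hodd] at hζq
      norm_num at hζq
    -- p₂ = (b0, y+1) and p₃ = (b0, y+1+ε)
    have hp2u : ((b0, y + 1) : F × DualNumber (ZMod 2)) ≠ (b0, y) := by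
      intro hh; exact dd1 y (congrArg Prod.snd hh)
    have hp3u : ((b0, y + (1 + DualNumber.eps)) : F × DualNumber (ZMod 2)) ≠ (b0, y) := by
      intro hh; exact dd3 y (congrArg Prod.snd hh)
    have hfst2 : ¬ ((y + 1 : DualNumber (ZMod 2)).fst = y.fst) := by
      rw [fst_add_one]; exact zmod2_succ_ne _
    have hfst3 : ¬ ((y + (1 + DualNumber.eps) : DualNumber (ZMod 2)).fst = y.fst) := by
      rw [fst_add_one_eps]; exact zmod2_succ_ne _
    have hp2 := hval b0 (y + 1)
    rw [if_neg hp2u, if_neg hp2u, if_pos rfl, if_neg hfst2, if_neg hfst2] at hp2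
    have hp3 := hval b0 (y + (1 + DualNumber.eps))
    rw [if_neg hp3u, if_neg hp3u, if_pos rfl, if_neg hfst3, if_neg hfst3] at hp3
    -- the generic contradiction from a vanishing off-diagonal entry
    have hcontra : ¬ ((0 : ℂ)
        + (ζ⁻¹ - 1) * (2 * 2 * 2 : ℂ)⁻¹ * ((1 : ℂ) * 0 + 2 * ((1 : ℂ) * 1))
        + (ζ - 1) * (2 * 2 * 2 : ℂ)⁻¹ * ((1 : ℂ) * 0 - 2 * ((1 : ℂ) * 1)) = 0 + 0) := by
      intro hcc
      have hm : ζ⁻¹ = ζ := by linear_combination 4 * hcc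
      have hzz : ζ * ζ = 1 := by
        have h2 : ζ * ζ⁻¹ = ζ * ζ := by rw [hm]
        rw [mul_inv_cancel₀ hζ0] at h2
        exact h2.symm
      rcases mul_self_eq_one_iff.mp hzz with h1 | h1
      · exact hζ1 h1
      · exact hζm1 h1
    by_cases hv2 : ((b0, y + 1) : F × DualNumber (ZMod 2)) = v
    · by_cases hv3 : ((b0, y + (1 + DualNumber.eps)) : F × DualNumber (ZMod 2)) = v
      · exact dd4 y (congrArg Prod.snd (hv2.trans hv3.symm))
      · rw [if_neg hv3] at hp3
        exact hcontra hp3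
    · rw [if_neg hv2] at hp2
      exact hcontra hp2
end
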